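/- arXiv:2209.05431 — 2 statements merged into one kernel-verified Lean document; each statement's English description precedes it below -/
import Mathlib

section
/- Fix integers l ≥ 0 and k ≥ 1. For j ∈ ℤ and n ∈ ℕ let H_n(j, k) := {h ∈ F_n : -k ≤ h(j) ≤ k}. Then lim_{n→∞} |⋃_{j=-l}^{l} H_n(j, k)| / |F_n| = 0; in particular, for each fixed j ∈ ℤ, lim_{n→∞} |H_n(j, k)| / |F_n| = 0. -/
open Filter

/-- The `h`-right hand-side partial shift `θ_h : ℤ → ℤ`. -/
def theta (h : ℤ) : ℤ → ℤ := fun k => if k < h then k else k + 1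

/-- The composition `θ_{-n}^{c(-n)} ∘ θ_{-n+1}^{c(-n+1)} ∘ ⋯ ∘ θ_{n}^{c(n)}`. -/
def thetaProd (n : ℕ) (c : ℤ → ℕ) : ℤ → ℤ :=
  ((List.range (2 * n + 1)).map
    (fun i => (theta (-(n : ℤ) + i))^[c (-(n : ℤ) + i)])).foldr (· ∘ ·) id

/-- The `n`-th set of the right Følner sequence of `𝕁_ℤ`: maps of the form
`θ_{-n}^{h_{-n}} ∘ ⋯ ∘ θ_{n}^{h_n} ∘ τ^l` with `∑ h_i ≤ n²` and `-n ≤ l ≤ n`. -/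
def FolnerSet (n : ℕ) : Set (ℤ → ℤ) :=
  {h | ∃ (c : ℤ → ℕ) (l : ℤ),
    (∑ i ∈ Finset.Icc (-(n : ℤ)) (n : ℤ), c i) ≤ n ^ 2 ∧
    -(n : ℤ) ≤ l ∧ l ≤ (n : ℤ) ∧
    h = (thetaProd n c) ∘ (fun k => k + l)}


/-- `H_n(j, k) = {h ∈ F_n : -k ≤ h(j) ≤ k}`. -/
def Hset (n : ℕ) (j k : ℤ) : Set (ℤ → ℤ) :=
  {h ∈ FolnerSet n | -k ≤ h j ∧ h j ≤ k}

/-! ### Auxiliary development -/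

lemma theta_iterate (h : ℤ) (t : ℕ) (x : ℤ) :
    (theta h)^[t] x = if x < h then x else x + t := by
  induction t with
  | zero => simp
  | succ t ih =>
    rw [Function.iterate_succ_apply', ih]
    by_cases hx : x < h
    · simp [hx, theta]
    · have : ¬ (x + (t:ℤ) < h) := by omega
      simp only [if_neg hx, theta, if_neg this]
      push_cast; ring

lemma foldr_comp_apply (L : List (ℤ → ℤ)) (g : ℤ → ℤ) (x : ℤ) :
    (L.foldr (· ∘ ·) g) x = (L.foldr (· ∘ ·) id) (g x) := by
  induction L with
  | nil => rfl
  | cons f t ih => simp [List.foldr_cons, Function.comp_apply, ih]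

lemma eval_aux (c : ℤ → ℕ) (a : ℤ) (N : ℕ) (x : ℤ) :
    ((List.range N).map (fun i : ℕ => (theta (a + i))^[c (a + i)])).foldr (· ∘ ·) id x
      = x + ∑ i ∈ (Finset.range N).filter (fun i : ℕ => a + i ≤ x), (c (a + i) : ℤ) := by
  induction N generalizing x with
  | zero => simp
  | succ N ih =>
    rw [List.range_succ, List.map_append, List.foldr_append]
    simp only [List.map_cons, List.map_nil, List.foldr_cons, List.foldr_nil]
    rw [foldr_comp_apply]
    simp only [Function.comp_apply, id_eq]
    by_cases hx : a + N ≤ x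
    · have h1 : (theta (a+(N:ℤ)))^[c (a+(N:ℤ))] x = x + c (a+(N:ℤ)) := by
        rw [theta_iterate, if_neg (by omega)]
      rw [h1, ih]
      have hall : ∀ i ∈ Finset.range N, a + (i:ℤ) ≤ x + c (a+(N:ℤ)) := by
        intro i hi; simp only [Finset.mem_range] at hi
        have : (i:ℤ) < N := by exact_mod_cast hi
        omega
      have hall' : ∀ i ∈ Finset.range (N+1), a + (i:ℤ) ≤ x := by
        intro i hi; simp only [Finset.mem_range] at hi
        have : (i:ℤ) < N + 1 := by exact_mod_cast hi
        omega
      rw [Finset.filter_true_of_mem hall, Finset.filter_true_of_mem hall',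
        Finset.sum_range_succ]
      ring
    · have h1 : (theta (a+(N:ℤ)))^[c (a+(N:ℤ))] x = x := by
        rw [theta_iterate, if_pos (by omega)]
      rw [h1, ih, Finset.range_add_one, Finset.filter_insert, if_neg hx]

lemma thetaProd_eval (n : ℕ) (c : ℤ → ℕ) (x : ℤ) :
    thetaProd n c x
      = x + ∑ i ∈ (Finset.range (2*n+1)).filter (fun i : ℕ => -(n:ℤ) + i ≤ x),
          (c (-(n:ℤ) + i) : ℤ) := by
  have hl : ((List.range (2*n+1)).flatMap fun a : ℕ => ([(a:ℤ)] : List ℤ))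
      = (List.range (2*n+1)).map (fun a : ℕ => (a:ℤ)) :=
    List.flatMap_pure_eq_map (fun a : ℕ => (a:ℤ)) (List.range (2*n+1))
  have := eval_aux c (-(n:ℤ)) (2*n+1) x
  simpa [thetaProd, hl, List.map_map, Function.comp_def] using this

/-! ### Counting tuples -/

def exactT (m s : ℕ) : Finset (Fin m → ℕ) := Finset.piAntidiag (Finset.univ : Finset (Fin m)) s

lemma mem_exactT {m s : ℕ} {v : Fin m → ℕ} : v ∈ exactT m s ↔ ∑ i, v i = s := by
  simp [exactT, Finset.mem_piAntidiag]

lemma card_exactT (m s : ℕ) : (exactT m s).card = (m + s - 1).choose s := by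
  rw [exactT, ← Finset.map_sym_eq_piAntidiag, Finset.card_map, Finset.sym_univ,
    Finset.card_univ, Sym.card_sym_eq_choose, Fintype.card_fin]

def leT (m s : ℕ) : Finset (Fin m → ℕ) :=
  (Fintype.piFinset fun _ => Finset.range (s+1)).filter fun v => ∑ i, v i ≤ s

lemma mem_leT {m s : ℕ} {v : Fin m → ℕ} : v ∈ leT m s ↔ ∑ i, v i ≤ s := by
  simp only [leT, Finset.mem_filter, Fintype.mem_piFinset, Finset.mem_range]
  refine ⟨fun h => h.2, fun h => ⟨fun i => Nat.lt_succ_of_le (le_trans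
    (Finset.single_le_sum (f := v) (fun _ _ => Nat.zero_le _) (Finset.mem_univ i)) h), h⟩⟩

lemma card_leT (m s : ℕ) : (leT m s).card = (m + s).choose s := by
  have : (leT m s).card = (exactT (m+1) s).card := by
    apply Finset.card_bij' (fun (v : Fin m → ℕ) (_ : v ∈ leT m s) =>
        (Fin.snoc v (s - ∑ i, v i) : Fin (m+1) → ℕ))
      (fun (w : Fin (m+1) → ℕ) (_ : w ∈ exactT (m+1) s) => (Fin.init w : Fin m → ℕ))
    · intro v hv
      rw [mem_exactT, Fin.sum_univ_castSucc]
      simp only [Fin.snoc_castSucc, Fin.snoc_last]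
      have := mem_leT.mp hv
      omega
    · intro w hw
      rw [mem_leT]
      have := mem_exactT.mp hw
      rw [Fin.sum_univ_castSucc] at this
      have h2 : ∑ i : Fin m, Fin.init w i = ∑ i : Fin m, w i.castSucc :=
        Finset.sum_congr rfl fun i _ => rfl
      omega
    · intro v hv
      exact Fin.init_snoc _ _
    · intro w hw
      have := mem_exactT.mp hw
      rw [Fin.sum_univ_castSucc] at this
      have h2 : ∑ i : Fin m, Fin.init w i = ∑ i : Fin m, w i.castSucc :=
        Finset.sum_congr rfl fun i _ => rfl
      have h3 : s - ∑ i : Fin m, Fin.init w i = w (Fin.last m) := by omega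
      rw [h3, Fin.snoc_init_self]
  rw [this, card_exactT]
  congr 1
  omega

lemma choose_identity (n : ℕ) :
    (exactT (2*n+1) (n^2)).card * (n^2+2*n+1) = (leT (2*n+1) (n^2)).card * (2*n+1) := by
  rw [card_exactT, card_leT]
  have h1 : 2*n+1 + n^2 - 1 = n^2 + 2*n := by omega
  have h2 : 2*n+1 + n^2 = n^2 + 2*n + 1 := by omega
  rw [h1, h2]
  have cs : ∀ a b : ℕ, (a+b).choose a = (a+b).choose b := by
    intro a b
    rw [← Nat.choose_symm (Nat.le_add_left b a)]
    congr 1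
    omega
  have hs1 : (n^2+2*n).choose (n^2) = (n^2+2*n).choose (2*n) := cs (n^2) (2*n)
  have hs2 : (n^2+2*n+1).choose (n^2) = (n^2+2*n+1).choose (2*n+1) := by
    have := cs (n^2) (2*n+1)
    rwa [show n^2+(2*n+1) = n^2+2*n+1 from by omega] at this
  rw [hs1, hs2]
  have := Nat.add_one_mul_choose_eq (n^2+2*n) (2*n)
  rw [mul_comm]
  exact this

lemma key_ratio (n : ℕ) :
    (exactT (2*n+1) (n^2)).card * n ≤ 3 * (leT (2*n+1) (n^2)).card := by
  have h := choose_identity n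
  have h3 : (2*n+1) * n ≤ 3 * (n^2+2*n+1) := by nlinarith
  have h2 : (exactT (2*n+1) (n^2)).card * n * (n^2+2*n+1)
      ≤ 3 * (leT (2*n+1) (n^2)).card * (n^2+2*n+1) := by
    calc (exactT (2*n+1) (n^2)).card * n * (n^2+2*n+1)
        = ((exactT (2*n+1) (n^2)).card * (n^2+2*n+1)) * n := by ring
      _ = ((leT (2*n+1) (n^2)).card * (2*n+1)) * n := by rw [h]
      _ = (leT (2*n+1) (n^2)).card * ((2*n+1) * n) := by ring
      _ ≤ (leT (2*n+1) (n^2)).card * (3 * (n^2+2*n+1)) :=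
          Nat.mul_le_mul_left _ h3
      _ = 3 * (leT (2*n+1) (n^2)).card * (n^2+2*n+1) := by ring
  exact Nat.le_of_mul_le_mul_right h2 (by positivity)

lemma leT_card_pos (m s : ℕ) : 0 < (leT m s).card :=
  Finset.card_pos.mpr ⟨0, mem_leT.mpr (by simp)⟩

/-! ### Parametrization of the Følner sets -/

def extv (n : ℕ) (v : Fin (2*n+1) → ℕ) : ℤ → ℕ :=
  fun m => ∑ i : Fin (2*n+1), if m = -(n:ℤ) + i then v i else 0

lemma extv_apply (n : ℕ) (v : Fin (2*n+1) → ℕ) (i : Fin (2*n+1)) :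
    extv n v (-(n:ℤ) + i) = v i := by
  rw [extv, Finset.sum_eq_single i]
  · simp
  · intro j _ hj
    rw [if_neg]
    intro hc
    exact hj (by
      have : (j:ℕ) = (i:ℕ) := by omega
      exact Fin.ext this)
  · simp

lemma sum_icc_eq_sum_fin (n : ℕ) (f : ℤ → ℕ) :
    ∑ m ∈ Finset.Icc (-(n:ℤ)) n, f m = ∑ i : Fin (2*n+1), f (-(n:ℤ) + i) := by
  refine Finset.sum_nbij' (fun m => (⟨(m+n).toNat % (2*n+1), Nat.mod_lt _ (by omega)⟩ : Fin (2*n+1)))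
    (fun i => -(n:ℤ) + (i : ℕ)) (fun m hm => Finset.mem_univ _) ?_ ?_ ?_ ?_
  · intro i _
    have hi := i.isLt
    refine Finset.mem_Icc.mpr ⟨by omega, by omega⟩
  · intro m hm
    have hm' := Finset.mem_Icc.mp hm
    have h1 : (m+n).toNat % (2*n+1) = (m+n).toNat := Nat.mod_eq_of_lt (by omega)
    simp only [h1]
    omega
  · intro i _
    have hi := i.isLt
    apply Fin.ext
    dsimp only
    have h2 : (-(n:ℤ) + (i:ℕ) + n).toNat = (i:ℕ) := by omega
    rw [h2, Nat.mod_eq_of_lt hi]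
  · intro m hm
    have hm' := Finset.mem_Icc.mp hm
    have h1 : (m+n).toNat % (2*n+1) = (m+n).toNat := Nat.mod_eq_of_lt (by omega)
    congr 1
    simp only [h1]
    omega

lemma psum_def (n : ℕ) (v : Fin (2*n+1) → ℕ) (y : ℤ) :
    ∑ i ∈ (Finset.range (2*n+1)).filter (fun i : ℕ => -(n:ℤ) + i ≤ y),
        ((extv n v) (-(n:ℤ) + i) : ℤ)
      = ∑ i ∈ Finset.univ.filter (fun i : Fin (2*n+1) => -(n:ℤ) + (i:ℕ) ≤ y), (v i : ℤ) := by
  rw [Finset.sum_filter, Finset.sum_filter, ← Fin.sum_univ_eq_sum_range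
    (fun i => if -(n:ℤ) + i ≤ y then ((extv n v) (-(n:ℤ) + i) : ℤ) else 0) (2*n+1)]
  refine Finset.sum_congr rfl fun i _ => ?_
  rw [extv_apply]

def emap (n : ℕ) (p : (Fin (2*n+1) → ℕ) × ℤ) : ℤ → ℤ :=
  (thetaProd n (extv n p.1)) ∘ (fun x => x + p.2)

lemma emap_apply (n : ℕ) (v : Fin (2*n+1) → ℕ) (l x : ℤ) :
    emap n (v, l) x = (x + l) +
      ∑ i ∈ Finset.univ.filter (fun i : Fin (2*n+1) => -(n:ℤ) + (i:ℕ) ≤ x + l), (v i : ℤ) := by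
  rw [emap, Function.comp_apply, thetaProd_eval, psum_def]

noncomputable def pSet (n : ℕ) : Finset ((Fin (2*n+1) → ℕ) × ℤ) :=
  leT (2*n+1) (n^2) ×ˢ Finset.Icc (-(n:ℤ)) n

lemma thetaProd_congr {n : ℕ} {c c' : ℤ → ℕ}
    (h : ∀ i : ℕ, i < 2*n+1 → c (-(n:ℤ)+i) = c' (-(n:ℤ)+i)) :
    thetaProd n c = thetaProd n c' := by
  funext x
  rw [thetaProd_eval, thetaProd_eval]
  congr 1
  refine Finset.sum_congr rfl fun i hi => ?_
  rw [h i (Finset.mem_range.mp (Finset.mem_filter.mp hi).1)]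

lemma folner_eq (n : ℕ) : FolnerSet n = emap n '' (pSet n : Set _) := by
  ext h
  constructor
  · rintro ⟨c, l, hc, hl1, hl2, rfl⟩
    refine ⟨(fun i => c (-(n:ℤ)+i), l), ?_, ?_⟩
    · refine Finset.mem_coe.mpr
        (Finset.mem_product.mpr ⟨mem_leT.mpr ?_, Finset.mem_Icc.mpr ⟨hl1, hl2⟩⟩)
      calc ∑ i : Fin (2*n+1), c (-(n:ℤ)+i) = ∑ m ∈ Finset.Icc (-(n:ℤ)) n, c m :=
            (sum_icc_eq_sum_fin n c).symm
        _ ≤ n^2 := hc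
    · have h2 : thetaProd n (extv n (fun i : Fin (2*n+1) => c (-(n:ℤ)+(i:ℕ))))
          = thetaProd n c :=
        thetaProd_congr (fun i hi => extv_apply n _ ⟨i, hi⟩)
      rw [emap]
      dsimp only
      rw [h2]
  · rintro ⟨⟨v, l⟩, hp, rfl⟩
    obtain ⟨hv, hl⟩ := Finset.mem_product.mp (Finset.mem_coe.mp hp)
    refine ⟨extv n v, l, ?_, (Finset.mem_Icc.mp hl).1, (Finset.mem_Icc.mp hl).2, rfl⟩
    calc ∑ m ∈ Finset.Icc (-(n:ℤ)) n, extv n v m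
        = ∑ i : Fin (2*n+1), extv n v (-(n:ℤ)+i) := sum_icc_eq_sum_fin n _
      _ = ∑ i, v i := Finset.sum_congr rfl fun i _ => extv_apply n v i
      _ ≤ n^2 := mem_leT.mp hv

lemma emap_injOn (n : ℕ) : Set.InjOn (emap n) (pSet n : Set _) := by
  rintro ⟨v, l⟩ hp ⟨v', l'⟩ hp' heq
  obtain ⟨hv, hl⟩ := Finset.mem_product.mp (Finset.mem_coe.mp hp)
  obtain ⟨hv', hl'⟩ := Finset.mem_product.mp (Finset.mem_coe.mp hp')
  have hl2 := Finset.mem_Icc.mp hl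
  have hl2' := Finset.mem_Icc.mp hl'
  have hL : l = l' := by
    have h1 := congrFun heq (-(2*(n:ℤ)) - 1)
    rw [emap_apply, emap_apply] at h1
    rw [Finset.filter_false_of_mem (fun i _ => by
          have hi := i.isLt; push_neg; omega),
        Finset.filter_false_of_mem (fun i _ => by
          have hi := i.isLt; push_neg; omega)] at h1
    simpa using h1
  subst hL
  have hS : ∀ y : ℤ,
      (∑ i ∈ Finset.univ.filter (fun i : Fin (2*n+1) => -(n:ℤ) + (i:ℕ) ≤ y), (v i : ℤ))
        = ∑ i ∈ Finset.univ.filter (fun i : Fin (2*n+1) => -(n:ℤ) + (i:ℕ) ≤ y), (v' i : ℤ) := by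
    intro y
    have h1 := congrFun heq (y - l)
    rw [emap_apply, emap_apply, sub_add_cancel] at h1
    exact add_left_cancel h1
  have hveq : v = v' := by
    funext i
    have key := hS (-(n:ℤ) + (i:ℕ))
    have key' := hS (-(n:ℤ) + (i:ℕ) - 1)
    have hins : Finset.univ.filter (fun i' : Fin (2*n+1) => -(n:ℤ) + (i':ℕ) ≤ -(n:ℤ) + (i:ℕ))
        = insert i (Finset.univ.filter
            (fun i' : Fin (2*n+1) => -(n:ℤ) + (i':ℕ) ≤ -(n:ℤ) + (i:ℕ) - 1)) := by
      ext i'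
      simp only [Finset.mem_filter, Finset.mem_univ, true_and, Finset.mem_insert]
      constructor
      · intro hle
        by_cases hii : (i' : ℕ) = (i : ℕ)
        · exact Or.inl (Fin.ext hii)
        · exact Or.inr (by omega)
      · rintro (rfl | h2)
        · omega
        · omega
    have hnot : i ∉ Finset.univ.filter
        (fun i' : Fin (2*n+1) => -(n:ℤ) + (i':ℕ) ≤ -(n:ℤ) + (i:ℕ) - 1) := by
      simp only [Finset.mem_filter, Finset.mem_univ, true_and]
      omega
    rw [hins, Finset.sum_insert hnot, Finset.sum_insert hnot, key'] at key
    exact_mod_cast add_right_cancel key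
  rw [hveq]

lemma card_icc_int (n : ℕ) : (Finset.Icc (-(n:ℤ)) n).card = 2*n+1 := by
  rw [Int.card_Icc]
  omega

lemma folner_finite (n : ℕ) : (FolnerSet n).Finite := by
  rw [folner_eq]
  exact (pSet n).finite_toSet.image _

lemma folner_ncard (n : ℕ) :
    (FolnerSet n).ncard = (leT (2*n+1) (n^2)).card * (2*n+1) := by
  rw [folner_eq, Set.ncard_image_of_injOn (emap_injOn n), Set.ncard_coe_finset, pSet,
    Finset.card_product, card_icc_int]

/-! ### Counting `Hset` -/

lemma card_T_le (n : ℕ) (x0 : ℤ) (hx1 : -(n:ℤ) ≤ x0) (hx2 : x0 ≤ (n:ℤ) - 1) (p : ℕ) :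
    ((leT (2*n+1) (n^2)).filter (fun v =>
        (∑ i ∈ Finset.univ.filter (fun i : Fin (2*n+1) => -(n:ℤ)+(i:ℕ) ≤ x0), v i) = p)).card
      ≤ (exactT (2*n+1) (n^2)).card := by
  have hi0 : (x0 + n).toNat < 2*n+1 := by omega
  set i0 : Fin (2*n+1) := ⟨(x0+n).toNat, hi0⟩ with hi0def
  have hzone : ∀ i : Fin (2*n+1), (-(n:ℤ)+(i:ℕ) ≤ x0) ↔ (i:ℕ) ≤ (i0:ℕ) := by
    intro i
    simp only [hi0def]
    omega
  refine Finset.card_le_card_of_injOn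
    (fun v => Function.update v i0 (v i0 + (n^2 - ∑ i, v i))) ?_ ?_
  · intro v hv
    obtain ⟨hv1, _⟩ := Finset.mem_filter.mp hv
    have hvle := mem_leT.mp hv1
    simp only [Finset.mem_coe]
    rw [mem_exactT]
    rw [Finset.sum_update_of_mem (Finset.mem_univ i0)]
    have herase := Finset.add_sum_erase Finset.univ v (Finset.mem_univ i0)
    have hsd : ∑ x ∈ Finset.univ \ {i0}, v x = ∑ x ∈ Finset.univ.erase i0, v x := by
      rw [Finset.sdiff_singleton_eq_erase]
    omega
  · intro v hv v' hv' hEq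
    dsimp only at hEq
    obtain ⟨hv1, hvp⟩ := Finset.mem_filter.mp hv
    obtain ⟨hv1', hvp'⟩ := Finset.mem_filter.mp hv'
    have hvle := mem_leT.mp hv1
    have hvle' := mem_leT.mp hv1'
    have hne : ∀ i : Fin (2*n+1), i ≠ i0 → v i = v' i := by
      intro i hi
      have := congrFun hEq i
      rwa [Function.update_of_ne hi, Function.update_of_ne hi] at this
    have hnonzone : ∀ i : Fin (2*n+1), ¬(-(n:ℤ)+(i:ℕ) ≤ x0) → v i = v' i := by
      intro i hi
      refine hne i (fun hcon => hi ?_)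
      rw [hcon, hzone]
    have hsum : ∑ i, v i = ∑ i, v' i := by
      rw [← Finset.sum_filter_add_sum_filter_not Finset.univ
            (fun i : Fin (2*n+1) => -(n:ℤ)+(i:ℕ) ≤ x0) v,
          ← Finset.sum_filter_add_sum_filter_not Finset.univ
            (fun i : Fin (2*n+1) => -(n:ℤ)+(i:ℕ) ≤ x0) v', hvp, hvp']
      congr 1
      refine Finset.sum_congr rfl fun i hi => ?_
      exact hnonzone i (Finset.mem_filter.mp hi).2
    have hupd := congrFun hEq i0
    rw [Function.update_self, Function.update_self] at hupd
    have hvi0 : v i0 = v' i0 := by omega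
    funext i
    by_cases hii : i = i0
    · rw [hii]; exact hvi0
    · exact hne i hii

lemma card_V_le (n : ℕ) (k j ll : ℤ) (hk : 1 ≤ k) (hn : k.toNat + 1 ≤ n) :
    ((leT (2*n+1) (n^2)).filter
      (fun v => -k ≤ emap n (v, ll) j ∧ emap n (v, ll) j ≤ k)).card
      ≤ (2*k.toNat+1) * (exactT (2*n+1) (n^2)).card := by
  set x0 : ℤ := j + ll with hx0
  have hemap : ∀ v : Fin (2*n+1) → ℕ, emap n (v, ll) j
      = x0 + ∑ i ∈ Finset.univ.filter (fun i : Fin (2*n+1) => -(n:ℤ) + (i:ℕ) ≤ x0), (v i : ℤ) :=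
    fun v => emap_apply n v ll j
  by_cases hx : -(n:ℤ) ≤ x0 ∧ x0 ≤ (n:ℤ) - 1
  · -- main case
    set W : Finset ℕ := Finset.Icc ((-k - x0).toNat) ((k - x0).toNat) with hW
    have hsub : (leT (2*n+1) (n^2)).filter
        (fun v => -k ≤ emap n (v, ll) j ∧ emap n (v, ll) j ≤ k)
        ⊆ W.biUnion (fun p => (leT (2*n+1) (n^2)).filter (fun v =>
            (∑ i ∈ Finset.univ.filter (fun i : Fin (2*n+1) => -(n:ℤ)+(i:ℕ) ≤ x0), v i) = p)) := by
      intro v hv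
      obtain ⟨hv1, hc1, hc2⟩ := Finset.mem_filter.mp hv
      rw [hemap] at hc1 hc2
      set P : ℕ := ∑ i ∈ Finset.univ.filter (fun i : Fin (2*n+1) => -(n:ℤ)+(i:ℕ) ≤ x0), v i
        with hP
      have hcast : (P : ℤ)
          = ∑ i ∈ Finset.univ.filter (fun i : Fin (2*n+1) => -(n:ℤ)+(i:ℕ) ≤ x0), (v i : ℤ) := by
        push_cast [hP]
        rfl
      refine Finset.mem_biUnion.mpr ⟨P, ?_, Finset.mem_filter.mpr ⟨hv1, rfl⟩⟩
      rw [hW, Finset.mem_Icc]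
      constructor
      · omega
      · omega
    calc ((leT (2*n+1) (n^2)).filter
          (fun v => -k ≤ emap n (v, ll) j ∧ emap n (v, ll) j ≤ k)).card
        ≤ (W.biUnion (fun p => (leT (2*n+1) (n^2)).filter (fun v =>
            (∑ i ∈ Finset.univ.filter (fun i : Fin (2*n+1) => -(n:ℤ)+(i:ℕ) ≤ x0), v i)
              = p))).card := Finset.card_le_card hsub
      _ ≤ ∑ p ∈ W, ((leT (2*n+1) (n^2)).filter (fun v =>
            (∑ i ∈ Finset.univ.filter (fun i : Fin (2*n+1) => -(n:ℤ)+(i:ℕ) ≤ x0), v i)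
              = p)).card := Finset.card_biUnion_le
      _ ≤ ∑ _p ∈ W, (exactT (2*n+1) (n^2)).card :=
          Finset.sum_le_sum fun p _ => card_T_le n x0 hx.1 hx.2 p
      _ = W.card * (exactT (2*n+1) (n^2)).card := by rw [Finset.sum_const, smul_eq_mul]
      _ ≤ (2*k.toNat+1) * (exactT (2*n+1) (n^2)).card := by
          refine Nat.mul_le_mul_right _ ?_
          rw [hW, Nat.card_Icc]
          omega
  · -- degenerate case : the filter is empty
    have hempty : (leT (2*n+1) (n^2)).filter
        (fun v => -k ≤ emap n (v, ll) j ∧ emap n (v, ll) j ≤ k) = ∅ := by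
      refine Finset.filter_false_of_mem ?_
      intro v _
      rw [hemap]
      rcases (by omega : x0 < -(n:ℤ) ∨ (n:ℤ) ≤ x0) with hcase | hcase
      · have hz : Finset.univ.filter (fun i : Fin (2*n+1) => -(n:ℤ)+(i:ℕ) ≤ x0) = ∅ :=
          Finset.filter_false_of_mem (fun i _ => by omega)
        rw [hz]
        simp only [Finset.sum_empty, add_zero]
        intro hcontra
        omega
      · have hpos : (0:ℤ) ≤ ∑ i ∈ Finset.univ.filter
            (fun i : Fin (2*n+1) => -(n:ℤ)+(i:ℕ) ≤ x0), (v i : ℤ) :=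
          Finset.sum_nonneg fun i _ => by positivity
        intro hcontra
        omega
    rw [hempty]
    simp

lemma ncard_biUnion_le {α β : Type*} [DecidableEq α] (J : Finset α) (f : α → Set β) :
    (⋃ j ∈ (J : Set α), f j).ncard ≤ ∑ j ∈ J, (f j).ncard := by
  induction J using Finset.induction with
  | empty => simp
  | insert a s hx ih =>
    rw [Finset.coe_insert, Set.biUnion_insert, Finset.sum_insert hx]
    exact le_trans (Set.ncard_union_le _ _) (Nat.add_le_add_left ih _)

lemma hset_ncard_le (n : ℕ) (j k : ℤ) (hk : 1 ≤ k) (hn : k.toNat + 1 ≤ n) :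
    (Hset n j k).ncard ≤ (2*n+1) * ((2*k.toNat+1) * (exactT (2*n+1) (n^2)).card) := by
  classical
  set Qj : Finset ((Fin (2*n+1) → ℕ) × ℤ) :=
    (pSet n).filter (fun p => -k ≤ emap n p j ∧ emap n p j ≤ k) with hQj
  have hsub : Hset n j k ⊆ emap n '' (Qj : Set _) := by
    rintro h ⟨hF, hb1, hb2⟩
    rw [folner_eq] at hF
    obtain ⟨p, hp, rfl⟩ := hF
    exact ⟨p, Finset.mem_coe.mpr (Finset.mem_filter.mpr ⟨Finset.mem_coe.mp hp, hb1, hb2⟩), rfl⟩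
  have h1 : (Hset n j k).ncard ≤ Qj.card := by
    calc (Hset n j k).ncard ≤ (emap n '' (Qj : Set _)).ncard :=
          Set.ncard_le_ncard hsub (Qj.finite_toSet.image _)
      _ ≤ (Qj : Set ((Fin (2*n+1) → ℕ) × ℤ)).ncard := Set.ncard_image_le Qj.finite_toSet
      _ = Qj.card := Set.ncard_coe_finset _
  have h2 : Qj ⊆ (Finset.Icc (-(n:ℤ)) n).biUnion (fun ll =>
      ((leT (2*n+1) (n^2)).filter
        (fun v => -k ≤ emap n (v, ll) j ∧ emap n (v, ll) j ≤ k)).image (fun v => (v, ll))) := by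
    rintro ⟨v, ll⟩ hq
    obtain ⟨hq1, hq2⟩ := Finset.mem_filter.mp hq
    obtain ⟨hv, hll⟩ := Finset.mem_product.mp hq1
    exact Finset.mem_biUnion.mpr ⟨ll, hll,
      Finset.mem_image.mpr ⟨v, Finset.mem_filter.mpr ⟨hv, hq2⟩, rfl⟩⟩
  have h3 : Qj.card ≤ (2*n+1) * ((2*k.toNat+1) * (exactT (2*n+1) (n^2)).card) := by
    calc Qj.card ≤ _ := Finset.card_le_card h2
      _ ≤ ∑ ll ∈ Finset.Icc (-(n:ℤ)) n, (((leT (2*n+1) (n^2)).filter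
            (fun v => -k ≤ emap n (v, ll) j ∧ emap n (v, ll) j ≤ k)).image
              (fun v => (v, ll))).card := Finset.card_biUnion_le
      _ ≤ ∑ ll ∈ Finset.Icc (-(n:ℤ)) n, ((leT (2*n+1) (n^2)).filter
            (fun v => -k ≤ emap n (v, ll) j ∧ emap n (v, ll) j ≤ k)).card :=
          Finset.sum_le_sum fun ll _ => Finset.card_image_le
      _ ≤ ∑ _ll ∈ Finset.Icc (-(n:ℤ)) n, (2*k.toNat+1) * (exactT (2*n+1) (n^2)).card :=
          Finset.sum_le_sum fun ll _ => card_V_le n k j ll hk hn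
      _ = (2*n+1) * ((2*k.toNat+1) * (exactT (2*n+1) (n^2)).card) := by
          rw [Finset.sum_const, smul_eq_mul, card_icc_int]
  exact le_trans h1 h3

lemma main_tendsto (k : ℤ) (hk : 1 ≤ k) (J : Finset ℤ) :
    Tendsto (fun n : ℕ => (((⋃ j ∈ (J : Set ℤ), Hset n j k).ncard : ℝ)
      / ((FolnerSet n).ncard : ℝ))) atTop (nhds 0) := by
  classical
  set κ : ℕ := k.toNat with hκ
  set C : ℝ := ((J.card * (2*κ+1) * 3 : ℕ) : ℝ) with hC
  have hupper : ∀ n : ℕ, κ + 1 ≤ n →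
      ((⋃ j ∈ (J : Set ℤ), Hset n j k).ncard : ℝ) / ((FolnerSet n).ncard : ℝ) ≤ C / n := by
    intro n hn
    have hnat : (⋃ j ∈ (J : Set ℤ), Hset n j k).ncard * n
        ≤ (J.card * (2*κ+1) * 3) * ((leT (2*n+1) (n^2)).card * (2*n+1)) := by
      have f1 : (⋃ j ∈ (J : Set ℤ), Hset n j k).ncard
          ≤ J.card * ((2*n+1) * ((2*κ+1) * (exactT (2*n+1) (n^2)).card)) := by
        calc (⋃ j ∈ (J : Set ℤ), Hset n j k).ncard ≤ ∑ j ∈ J, (Hset n j k).ncard :=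
              ncard_biUnion_le J _
          _ ≤ ∑ _j ∈ J, (2*n+1) * ((2*κ+1) * (exactT (2*n+1) (n^2)).card) :=
              Finset.sum_le_sum fun j _ => hset_ncard_le n j k hk hn
          _ = J.card * ((2*n+1) * ((2*κ+1) * (exactT (2*n+1) (n^2)).card)) := by
              rw [Finset.sum_const, smul_eq_mul]
      have f2 := key_ratio n
      calc (⋃ j ∈ (J : Set ℤ), Hset n j k).ncard * n
          ≤ (J.card * ((2*n+1) * ((2*κ+1) * (exactT (2*n+1) (n^2)).card))) * n :=
            Nat.mul_le_mul_right _ f1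
        _ = (J.card * (2*κ+1) * (2*n+1)) * ((exactT (2*n+1) (n^2)).card * n) := by ring
        _ ≤ (J.card * (2*κ+1) * (2*n+1)) * (3 * (leT (2*n+1) (n^2)).card) :=
            Nat.mul_le_mul_left _ f2
        _ = (J.card * (2*κ+1) * 3) * ((leT (2*n+1) (n^2)).card * (2*n+1)) := by ring
    have hD : (0:ℝ) < ((FolnerSet n).ncard : ℝ) := by
      rw [folner_ncard]
      have := leT_card_pos (2*n+1) (n^2)
      positivity
    have hn0 : (0:ℝ) < (n:ℝ) := by
      have : 0 < n := by omega
      exact_mod_cast this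
    rw [div_le_div_iff₀ hD hn0]
    rw [folner_ncard]
    calc ((⋃ j ∈ (J : Set ℤ), Hset n j k).ncard : ℝ) * n
        = (((⋃ j ∈ (J : Set ℤ), Hset n j k).ncard * n : ℕ) : ℝ) := by push_cast; ring
      _ ≤ (((J.card * (2*κ+1) * 3) * ((leT (2*n+1) (n^2)).card * (2*n+1)) : ℕ) : ℝ) := by
          exact_mod_cast hnat
      _ = C * (((leT (2*n+1) (n^2)).card * (2*n+1) : ℕ) : ℝ) := by push_cast [hC]; ring
  refine tendsto_of_tendsto_of_tendsto_of_le_of_le' tendsto_const_nhds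
    (tendsto_const_div_atTop_nhds_zero_nat C) ?_ ?_
  · filter_upwards with n
    positivity
  · filter_upwards [eventually_ge_atTop (κ+1)] with n hn
    exact hupper n hn

theorem stmt1 (l k : ℤ) (hl : 0 ≤ l) (hk : 1 ≤ k) :
    Tendsto (fun n : ℕ =>
        (((⋃ j ∈ Set.Icc (-l) l, Hset n j k).ncard : ℝ)
          / ((FolnerSet n).ncard : ℝ)) : ℕ → ℝ) atTop (nhds 0) ∧
      ∀ j : ℤ, Tendsto (fun n : ℕ =>
        (((Hset n j k).ncard : ℝ)
          / ((FolnerSet n).ncard : ℝ)) : ℕ → ℝ) atTop (nhds 0) := by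
  constructor
  · have := main_tendsto k hk (Finset.Icc (-l) l)
    simpa [Finset.coe_Icc] using this
  · intro j
    have := main_tendsto k hk {j}
    simpa using this
end

section
/- Let n ∈ ℕ, let h_{-n}, …, h_n be nonnegative integers, let m ≥ 1 be an integer, and let 0 ≤ l ≤ n. Then (θ_{-n}^{h_{-n}} ∘ θ_{-n+1}^{h_{-n+1}} ∘ ⋯ ∘ θ_{n}^{h_n})(-n + l) ≤ m if and only if h_{-n} + h_{-n+1} + ⋯ + h_{-n+l} ≤ m + n - l. -/
open Filter

lemma theta_iter_lt (h k : ℤ) (j : ℕ) (hk : k < h) : (theta h)^[j] k = k := by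
  induction j with
  | zero => rfl
  | succ j ih => rw [Function.iterate_succ_apply]; simp only [theta, if_pos hk]; exact ih

lemma theta_iter_ge (h k : ℤ) (j : ℕ) (hk : h ≤ k) : (theta h)^[j] k = k + j := by
  induction j generalizing k with
  | zero => simp
  | succ j ih =>
    rw [Function.iterate_succ_apply]
    have h1 : theta h k = k + 1 := by simp [theta, not_lt.mpr hk]
    rw [h1, ih (k + 1) (by omega)]
    push_cast; ring

def gfun (n : ℕ) (c : ℤ → ℕ) (s : ℕ) : ℤ → ℤ :=
  ((List.range s).map
    (fun i : ℕ => (theta (-(n : ℤ) + (i : ℤ)))^[c (-(n : ℤ) + (i : ℤ))])).foldr (· ∘ ·) id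

lemma flatMap_singleton_map (l : List ℕ) (f : ℕ → ℤ) :
    l.flatMap (fun a => [f a]) = l.map f := by
  induction l with
  | nil => rfl
  | cons a t ih => simp [List.flatMap_cons, ih]

lemma thetaProd_eq_gfun (n : ℕ) (c : ℤ → ℕ) : thetaProd n c = gfun n c (2 * n + 1) := by
  unfold thetaProd gfun
  rw [show (do
      let a ← List.range (2 * n + 1)
      pure ((a : ℕ) : ℤ)) = (List.range (2 * n + 1)).map (fun a : ℕ => (a : ℤ)) from
    flatMap_singleton_map _ _]
  rw [List.map_map]
  rfl

lemma foldr_comp_init (L : List (ℤ → ℤ)) (a : ℤ → ℤ) :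
    L.foldr (· ∘ ·) a = (L.foldr (· ∘ ·) id) ∘ a := by
  induction L with
  | nil => rfl
  | cons f t ih => simp [List.foldr_cons, ih, Function.comp_assoc]

lemma gfun_succ (n : ℕ) (c : ℤ → ℕ) (s : ℕ) (x : ℤ) :
    gfun n c (s + 1) x = gfun n c s ((theta (-(n : ℤ) + s))^[c (-(n : ℤ) + s)] x) := by
  unfold gfun
  rw [List.range_succ, List.map_append, List.foldr_append, foldr_comp_init]
  simp

lemma gfun_high (n : ℕ) (c : ℤ → ℕ) (s : ℕ) (y : ℤ) (hy : -(n : ℤ) + s ≤ y + 1) :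
    gfun n c s y = y + ∑ i ∈ Finset.range s, (c (-(n : ℤ) + i) : ℤ) := by
  induction s generalizing y with
  | zero => simp [gfun]
  | succ s ih =>
    rw [gfun_succ, theta_iter_ge _ _ _ (by push_cast at hy ⊢; omega),
      ih _ (by push_cast at hy ⊢; omega), Finset.sum_range_succ]
    push_cast; ring

lemma gfun_val (n : ℕ) (c : ℤ → ℕ) (l s : ℕ) (hls : l < s) :
    gfun n c s (-(n : ℤ) + l) =
      -(n : ℤ) + l + ∑ i ∈ Finset.range (l + 1), (c (-(n : ℤ) + i) : ℤ) := by
  induction s with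
  | zero => omega
  | succ s ih =>
    rcases lt_or_eq_of_le (Nat.lt_succ_iff.mp hls) with h | h
    · rw [gfun_succ, theta_iter_lt _ _ _ (by push_cast; omega), ih h]
    · subst h
      rw [gfun_succ, theta_iter_ge _ _ _ (by push_cast; omega),
        gfun_high _ _ _ _ (by push_cast; omega), Finset.sum_range_succ]
      push_cast; ring

lemma sum_icc_eq_range (n : ℕ) (c : ℤ → ℕ) (l : ℕ) :
    (∑ i ∈ Finset.Icc (-(n : ℤ)) (-(n : ℤ) + l), (c i : ℤ)) =
      ∑ i ∈ Finset.range (l + 1), (c (-(n : ℤ) + i) : ℤ) := by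
  have : Finset.Icc (-(n : ℤ)) (-(n : ℤ) + l) =
      Finset.map ⟨fun i : ℕ => -(n : ℤ) + i, fun a b h => by simpa using h⟩ (Finset.range (l + 1)) := by
    ext x
    simp only [Finset.mem_Icc, Finset.mem_map, Finset.mem_range, Function.Embedding.coeFn_mk]
    constructor
    · intro h; exact ⟨(x + n).toNat, by omega, by show -(n : ℤ) + (((x + n).toNat : ℕ) : ℤ) = x; omega⟩
    · rintro ⟨a, ha, rfl⟩; show -(n : ℤ) ≤ -(n : ℤ) + (a : ℤ) ∧ -(n : ℤ) + (a : ℤ) ≤ -(n : ℤ) + l; omega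
  rw [this, Finset.sum_map]
  rfl

theorem stmt4 (n : ℕ) (c : ℤ → ℕ) (m : ℕ) (hm : 1 ≤ m) (l : ℕ) (hl : l ≤ n) :
    thetaProd n c (-(n : ℤ) + l) ≤ (m : ℤ) ↔
      (∑ i ∈ Finset.Icc (-(n : ℤ)) (-(n : ℤ) + l), (c i : ℤ)) ≤ (m : ℤ) + n - l := by
  have hval : gfun n c (2 * n + 1) (-(n : ℤ) + l) =
      -(n : ℤ) + l + ∑ i ∈ Finset.range (l + 1), (c (-(n : ℤ) + i) : ℤ) :=
    gfun_val n c l (2 * n + 1) (by omega)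
  rw [thetaProd_eq_gfun, hval, sum_icc_eq_range]
  omega
end
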